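/- Let H be a real Hilbert space, K a complete subspace of H, Π_K : H → K the orthogonal projection onto K, γ ∈ [0,1), and F : H → H a map satisfying ‖F x − F y‖ ≤ γ · ‖x − y‖ for all x, y ∈ H. Suppose q* ∈ K satisfies Π_K(F q*) = q*. Then for every q ∈ K, ⟪q − q*, F q − q⟫ ≤ (γ − 1) · ‖q − q*‖²; in particular, if q ≠ q* then ⟪q − q*, F q − q⟫ < 0. -/

import Mathlib

open scoped RealInnerProductSpace

/-- Iteration property: the mean update direction `⟪q − q*, F q − q⟫` is bounded by
`(γ − 1)‖q − q*‖²`, and is strictly negative whenever `q ≠ q*`. -/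
theorem projected_fixedPoint_iteration_property
    {H : Type*} [NormedAddCommGroup H] [InnerProductSpace ℝ H]
    (K : Submodule ℝ H) [CompleteSpace K]
    (γ : ℝ) (hγ0 : 0 ≤ γ) (hγ1 : γ < 1)
    (F : H → H) (hF : ∀ x y : H, ‖F x - F y‖ ≤ γ * ‖x - y‖)
    (qstar : K) (hqstar : K.orthogonalProjectionOnto (F qstar) = qstar) :
    ∀ q : K,
      ⟪(q : H) - qstar, F q - q⟫ ≤ (γ - 1) * ‖(q : H) - (qstar : H)‖ ^ 2 ∧
      (q ≠ qstar → ⟪(q : H) - qstar, F q - q⟫ < 0) := by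
  intro q
  set d : H := (q : H) - (qstar : H) with hd
  have hdK : d ∈ K := K.sub_mem q.2 qstar.2
  have horth : F qstar - (qstar : H) ∈ Kᗮ := by
    have := Submodule.sub_starProjection_mem_orthogonal (K := K) (F qstar)
    rwa [Submodule.starProjection_apply, hqstar] at this
  have hzero : ⟪d, F qstar - (qstar : H)⟫ = 0 :=
    Submodule.inner_right_of_mem_orthogonal hdK horth
  have hsplit : F (q : H) - (q : H)
      = (F q - F qstar) + (F qstar - (qstar : H)) + (-d) := by
    simp [hd]
  have hcs : ⟪d, F (q : H) - F qstar⟫ ≤ γ * ‖d‖ ^ 2 := by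
    calc ⟪d, F (q : H) - F qstar⟫ ≤ ‖d‖ * ‖F (q : H) - F qstar‖ :=
          real_inner_le_norm _ _
      _ ≤ ‖d‖ * (γ * ‖d‖) := by
          exact mul_le_mul_of_nonneg_left (hF _ _) (norm_nonneg _)
      _ = γ * ‖d‖ ^ 2 := by ring
  have key : ⟪d, F (q : H) - (q : H)⟫ ≤ (γ - 1) * ‖d‖ ^ 2 := by
    rw [hsplit, inner_add_right, inner_add_right, hzero, inner_neg_right,
      real_inner_self_eq_norm_sq]
    linarith
  refine ⟨key, fun hne => ?_⟩
  have hdne : d ≠ 0 := by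
    simp only [hd, sub_ne_zero]
    exact fun h => hne (Subtype.ext h)
  have hpos : 0 < ‖d‖ ^ 2 := pow_pos (norm_pos_iff.mpr hdne) 2
  nlinarith
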